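/- Let W = (w_{ij}) ∈ ℝ^{n×n} be a nonnegative, symmetric, doubly stochastic matrix with eigenvalues 1 = λ₁ > λ₂ ≥ ⋯ ≥ λ_n and ρ := max{|λ₂|, |λ_n|} < 1. Let α > 0 and let x_1, …, x_n, t_1, …, t_n ∈ ℝ^d with averages x̄ := (1/n)Σ_i x_i and t̄ := (1/n)Σ_i t_i. Define x_i⁺ := Σ_{j=1}^n w_{ij}(x_j − α t_j) and x̄⁺ := (1/n)Σ_i x_i⁺. Then Σ_{i=1}^n ‖x_i⁺ − x̄⁺‖² ≤ ρ Σ_{i=1}^n ‖x_i − x̄‖² + (ρ²α²/(1 − ρ)) Σ_{i=1}^n ‖t_i − t̄‖². -/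

import Mathlib

open Matrix

lemma dot_mulVec_orth {n : ℕ} (M : Matrix (Fin n) (Fin n) ℝ) (h : Mᵀ * M = 1)
    (a b : Fin n → ℝ) : M.mulVec a ⬝ᵥ M.mulVec b = a ⬝ᵥ b := by
  rw [dotProduct_mulVec]
  rw [show M.vecMul (M.mulVec a) = Mᵀ.mulVec (M.mulVec a) from (Matrix.mulVec_transpose M _).symm]
  rw [Matrix.mulVec_mulVec, h, Matrix.one_mulVec]

lemma spectral_contraction {n : ℕ} (hn : 0 < n)
    (W P : Matrix (Fin n) (Fin n) ℝ) (lam : Fin n → ℝ) (ρ : ℝ)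
    (hP : P * Pᵀ = 1)
    (hdiag : W = P * Matrix.diagonal lam * Pᵀ)
    (hW_rows : ∀ i, ∑ j, W i j = 1)
    (hlamk : ∀ k : Fin n, (k : ℕ) ≠ 0 → |lam k| ≤ ρ)
    (hρlt : ρ < 1)
    (z : Fin n → ℝ) (hz : ∑ i, z i = 0) :
    ∑ i, (W.mulVec z i) ^ 2 ≤ ρ ^ 2 * ∑ i, (z i) ^ 2 := by
  have hPtP : Pᵀ * P = 1 := mul_eq_one_comm.mp hP
  have hPP : Pᵀᵀ * Pᵀ = 1 := by rw [Matrix.transpose_transpose]; exact hP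
  set c : Fin n → ℝ := Pᵀ.mulVec z with hc
  -- W z in coordinates
  have hWz : W.mulVec z = P.mulVec ((Matrix.diagonal lam).mulVec c) := by
    rw [hdiag, ← Matrix.mulVec_mulVec, ← Matrix.mulVec_mulVec]
  -- ones vector
  set u : Fin n → ℝ := fun _ => 1 with hu
  have hWu : W.mulVec u = u := by
    funext i
    simp [Matrix.mulVec, dotProduct, hu, hW_rows i]
  set v : Fin n → ℝ := Pᵀ.mulVec u with hv
  have hDv : (Matrix.diagonal lam).mulVec v = v := by
    have h1 : P.mulVec ((Matrix.diagonal lam).mulVec v) = u := by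
      rw [hv, Matrix.mulVec_mulVec, Matrix.mulVec_mulVec, ← hdiag, hWu]
    have := congrArg (Pᵀ.mulVec ·) h1
    simpa [Matrix.mulVec_mulVec, ← Matrix.mul_assoc, hPtP, Matrix.one_mulVec, hv] using this
  have hvk : ∀ k : Fin n, (k : ℕ) ≠ 0 → v k = 0 := by
    intro k hk
    have h1 : lam k * v k = v k := by
      have := congrFun hDv k
      simpa [Matrix.mulVec_diagonal] using this
    have hne : lam k ≠ 1 := by
      have := hlamk k hk
      have := abs_le.mp this
      intro h; linarith [this.1, this.2]
    by_contra h0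
    exact hne (mul_right_cancel₀ h0 (by rw [one_mul]; exact h1))
  -- coordinates of z
  have hsumsq : ∀ f : Fin n → ℝ, ∑ i, f i ^ 2 = f ⬝ᵥ f := by
    intro f; simp [dotProduct, sq]
  set k0 : Fin n := ⟨0, hn⟩ with hk0
  have hvc : v ⬝ᵥ c = 0 := by
    rw [hv, hc, dot_mulVec_orth Pᵀ hPP]
    simp [dotProduct, hu, hz]
  have hvv : v ⬝ᵥ v = (n : ℝ) := by
    rw [hv, dot_mulVec_orth Pᵀ hPP]
    simp [dotProduct, hu]
  have hsingle : ∀ g : Fin n → ℝ, v ⬝ᵥ g = v k0 * g k0 := by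
    intro g
    rw [dotProduct]
    apply Finset.sum_eq_single
    · intro k _ hk
      rw [hvk k (by simpa [hk0, Fin.ext_iff] using hk), zero_mul]
    · intro h; exact absurd (Finset.mem_univ _) h
  have hv0 : v k0 ≠ 0 := by
    intro h0
    have := hsingle v
    rw [hvv, h0, mul_zero] at this
    have : (n : ℝ) ≠ 0 := Nat.cast_ne_zero.mpr (by omega)
    simp_all
  have hc0 : c k0 = 0 := by
    have := hsingle c
    rw [hvc] at this
    rcases mul_eq_zero.mp this.symm with h | h
    · exact absurd h hv0
    · exact h
  have hWzsum : ∑ i, (W.mulVec z i) ^ 2 = ∑ k, (lam k * c k) ^ 2 := by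
    rw [hsumsq, hWz, dot_mulVec_orth P hPtP]
    simp [dotProduct, Matrix.mulVec_diagonal, sq]
  have hzsum : ∑ i, (z i) ^ 2 = ∑ k, (c k) ^ 2 := by
    rw [hsumsq, hsumsq]
    rw [show c ⬝ᵥ c = z ⬝ᵥ z from by rw [hc, dot_mulVec_orth Pᵀ hPP]]
  rw [hWzsum, hzsum, Finset.mul_sum]
  apply Finset.sum_le_sum
  intro k _
  by_cases hk : (k : ℕ) = 0
  · have : k = k0 := by simp [hk0, Fin.ext_iff, hk]
    rw [this, hc0]
    simp
  · have hb := abs_le.mp (hlamk k hk)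
    have h1 : lam k ^ 2 ≤ ρ ^ 2 := sq_le_sq' hb.1 hb.2
    calc (lam k * c k) ^ 2 = lam k ^ 2 * c k ^ 2 := by ring
    _ ≤ ρ ^ 2 * c k ^ 2 := mul_le_mul_of_nonneg_right h1 (sq_nonneg _)

lemma young_ineq (ρ α A B : ℝ) (hρ0 : 0 ≤ ρ) (hρ1 : ρ < 1) :
    ρ ^ 2 * (A + α * B) ^ 2 ≤ ρ * A ^ 2 + ρ ^ 2 * α ^ 2 / (1 - ρ) * B ^ 2 := by
  have h2 : 0 < 1 - ρ := by linarith
  have key : ρ ^ 2 * (A + α * B) ^ 2 * (1 - ρ) ≤ (ρ * A ^ 2) * (1 - ρ) + ρ ^ 2 * α ^ 2 * B ^ 2 := by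
    nlinarith [mul_nonneg hρ0 (sq_nonneg ((1 - ρ) * A - ρ * α * B))]
  have h3 : ρ ^ 2 * α ^ 2 / (1 - ρ) * B ^ 2 = ρ ^ 2 * α ^ 2 * B ^ 2 / (1 - ρ) := by ring
  rw [h3, ← sub_le_iff_le_add', le_div_iff₀ h2]
  linarith [key]

lemma norm_sq_eucl {d : ℕ} (v : EuclideanSpace ℝ (Fin d)) : ‖v‖ ^ 2 = ∑ κ, (v κ) ^ 2 := by
  rw [EuclideanSpace.norm_eq, Real.sq_sqrt (Finset.sum_nonneg fun _ _ => sq_nonneg _)]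
  simp [Real.norm_eq_abs, sq_abs]


/-- Consensus-error contraction for the `x`-update of SLDBO:
with `W` nonnegative, symmetric, doubly stochastic with spectral parameter
`ρ = max{|λ₂|, |λₙ|} < 1`, step size `α > 0`, and `xᵢ⁺ = ∑ⱼ w_{ij}(xⱼ − α tⱼ)`, we have
`∑ ‖xᵢ⁺ − x̄⁺‖² ≤ ρ ∑ ‖xᵢ − x̄‖² + (ρ²α²/(1−ρ)) ∑ ‖tᵢ − t̄‖²`. -/
theorem consensus_error_x_update {n d : ℕ} (hn : 2 ≤ n)
    (W : Matrix (Fin n) (Fin n) ℝ)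
    (hW_nonneg : ∀ i j, 0 ≤ W i j)
    (hW_symm : W.IsSymm)
    (hW_rows : ∀ i, ∑ j, W i j = 1)
    (hW_cols : ∀ j, ∑ i, W i j = 1)
    (lam : Fin n → ℝ) (P : Matrix (Fin n) (Fin n) ℝ)
    (hP : P * Pᵀ = 1)
    (hdiag : W = P * Matrix.diagonal lam * Pᵀ)
    (hlam0 : lam ⟨0, by omega⟩ = 1)
    (hgap : lam ⟨1, by omega⟩ < 1)
    (hmono : Antitone lam)
    (ρ : ℝ)
    (hρdef : ρ = max |lam ⟨1, by omega⟩| |lam ⟨n - 1, by omega⟩|)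
    (hρlt : ρ < 1)
    (α : ℝ) (hα : 0 < α)
    (x t : Fin n → EuclideanSpace ℝ (Fin d))
    (xplus : Fin n → EuclideanSpace ℝ (Fin d))
    (hxplus : ∀ i, xplus i = ∑ j, W i j • (x j - α • t j)) :
    ∑ i, ‖xplus i - (n : ℝ)⁻¹ • ∑ l, xplus l‖ ^ 2
      ≤ ρ * ∑ i, ‖x i - (n : ℝ)⁻¹ • ∑ l, x l‖ ^ 2
        + ρ ^ 2 * α ^ 2 / (1 - ρ) * ∑ i, ‖t i - (n : ℝ)⁻¹ • ∑ l, t l‖ ^ 2 := by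
  have hn0 : (n : ℝ) ≠ 0 := Nat.cast_ne_zero.mpr (by omega)
  have hρ0 : 0 ≤ ρ := by
    rw [hρdef]; exact le_trans (abs_nonneg _) (le_max_left _ _)
  have hlamk : ∀ k : Fin n, (k : ℕ) ≠ 0 → |lam k| ≤ ρ := by
    intro k hk
    have h1 : lam k ≤ lam ⟨1, by omega⟩ := hmono (by simp [Fin.le_def]; omega)
    have h2 : lam ⟨n - 1, by omega⟩ ≤ lam k := by
      apply hmono
      simp [Fin.le_def]
      omega
    rw [hρdef, abs_le]
    constructor
    · calc -(max |lam ⟨1, by omega⟩| |lam ⟨n - 1, by omega⟩|)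
          ≤ -|lam ⟨n - 1, by omega⟩| := neg_le_neg (le_max_right _ _)
        _ ≤ lam ⟨n - 1, by omega⟩ := neg_abs_le _
        _ ≤ lam k := h2
    · calc lam k ≤ lam ⟨1, by omega⟩ := h1
        _ ≤ |lam ⟨1, by omega⟩| := le_abs_self _
        _ ≤ _ := le_max_left _ _
  set xb : EuclideanSpace ℝ (Fin d) := (n : ℝ)⁻¹ • ∑ l, x l with hxb
  set tb : EuclideanSpace ℝ (Fin d) := (n : ℝ)⁻¹ • ∑ l, t l with htb
  set z : Fin n → EuclideanSpace ℝ (Fin d) := fun i => (x i - xb) - α • (t i - tb) with hzdef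
  have hcast : ∀ s : EuclideanSpace ℝ (Fin d), n • ((n : ℝ)⁻¹ • s) = s := by
    intro s
    rw [← Nat.cast_smul_eq_nsmul ℝ, smul_smul, mul_inv_cancel₀ hn0, one_smul]
  have hzsum : ∑ i, z i = 0 := by
    have hx0 : ∑ i, (x i - xb) = 0 := by
      rw [Finset.sum_sub_distrib, Finset.sum_const, Finset.card_univ, Fintype.card_fin,
        hxb, hcast, sub_self]
    have ht0 : ∑ i, (t i - tb) = 0 := by
      rw [Finset.sum_sub_distrib, Finset.sum_const, Finset.card_univ, Fintype.card_fin,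
        htb, hcast, sub_self]
    simp only [hzdef]
    rw [Finset.sum_sub_distrib, hx0, ← Finset.smul_sum, ht0, smul_zero, sub_zero]
  have hzk : ∀ κ : Fin d, ∑ i, z i κ = 0 := by
    intro κ
    have := congrArg (fun v : EuclideanSpace ℝ (Fin d) => v κ) hzsum
    simpa [WithLp.ofLp_sum, Finset.sum_apply] using this
  have hxsum : ∑ l, xplus l = ∑ j, (x j - α • t j) := by
    simp only [hxplus]
    rw [Finset.sum_comm]
    refine Finset.sum_congr rfl fun j _ => ?_
    rw [← Finset.sum_smul, hW_cols j, one_smul]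
  have hA : ∀ i, xplus i - (n : ℝ)⁻¹ • ∑ l, xplus l = ∑ j, W i j • z j := by
    intro i
    rw [hxplus i, hxsum]
    have h1 : ∑ j, W i j • z j
        = ∑ j, W i j • (x j - α • t j) - (∑ j, W i j) • ((n : ℝ)⁻¹ • ∑ l, (x l - α • t l)) := by
      rw [Finset.sum_smul, ← Finset.sum_sub_distrib]
      refine Finset.sum_congr rfl fun j _ => ?_
      rw [← smul_sub]
      congr 1
      show (x j - xb) - α • (t j - tb) = x j - α • t j - (n : ℝ)⁻¹ • ∑ l, (x l - α • t l)
      rw [hxb, htb, Finset.sum_sub_distrib, ← Finset.smul_sum]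
      module
    rw [h1, hW_rows i, one_smul]
  have hcomp : ∀ i, ‖∑ j, W i j • z j‖ ^ 2 = ∑ κ, (W.mulVec (fun l => z l κ) i) ^ 2 := by
    intro i
    rw [norm_sq_eucl]
    refine Finset.sum_congr rfl fun κ _ => ?_
    congr 1
    rw [WithLp.ofLp_sum, Finset.sum_apply]
    simp [Matrix.mulVec, dotProduct, smul_eq_mul]
  calc ∑ i, ‖xplus i - (n : ℝ)⁻¹ • ∑ l, xplus l‖ ^ 2
      = ∑ i, ∑ κ, (W.mulVec (fun l => z l κ) i) ^ 2 := by
        refine Finset.sum_congr rfl fun i _ => ?_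
        rw [hA i, hcomp i]
    _ = ∑ κ, ∑ i, (W.mulVec (fun l => z l κ) i) ^ 2 := Finset.sum_comm
    _ ≤ ∑ κ, ρ ^ 2 * ∑ i, (z i κ) ^ 2 := by
        refine Finset.sum_le_sum fun κ _ => ?_
        exact spectral_contraction (by omega) W P lam ρ hP hdiag hW_rows hlamk hρlt
          (fun l => z l κ) (hzk κ)
    _ = ρ ^ 2 * ∑ i, ‖z i‖ ^ 2 := by
        rw [← Finset.mul_sum]
        congr 1
        rw [Finset.sum_comm]
        exact Finset.sum_congr rfl fun i _ => (norm_sq_eucl (z i)).symm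
    _ ≤ ρ * ∑ i, ‖x i - xb‖ ^ 2 + ρ ^ 2 * α ^ 2 / (1 - ρ) * ∑ i, ‖t i - tb‖ ^ 2 := by
        rw [Finset.mul_sum, Finset.mul_sum, Finset.mul_sum, ← Finset.sum_add_distrib]
        refine Finset.sum_le_sum fun i _ => ?_
        have htri : ‖z i‖ ≤ ‖x i - xb‖ + α * ‖t i - tb‖ := by
          calc ‖z i‖ = ‖(x i - xb) - α • (t i - tb)‖ := rfl
            _ ≤ ‖x i - xb‖ + ‖α • (t i - tb)‖ := norm_sub_le _ _
            _ = ‖x i - xb‖ + α * ‖t i - tb‖ := by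
                rw [norm_smul, Real.norm_eq_abs, abs_of_pos hα]
        have h2 : ‖z i‖ ^ 2 ≤ (‖x i - xb‖ + α * ‖t i - tb‖) ^ 2 :=
          pow_le_pow_left₀ (norm_nonneg _) htri 2
        calc ρ ^ 2 * ‖z i‖ ^ 2
            ≤ ρ ^ 2 * (‖x i - xb‖ + α * ‖t i - tb‖) ^ 2 :=
              mul_le_mul_of_nonneg_left h2 (sq_nonneg ρ)
          _ ≤ ρ * ‖x i - xb‖ ^ 2 + ρ ^ 2 * α ^ 2 / (1 - ρ) * ‖t i - tb‖ ^ 2 :=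
              young_ineq ρ α _ _ hρ0 hρlt
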